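/- Let f : ℝ^N → ℝ^N be given by f(θ) = ∇L(θ) with invertible Jacobian H at a point θ, and suppose α := β·γ < 1/4 where β = ‖H⁻¹ f(θ)‖ and the Newton iteration θ_{k+1} = θ_k − H(θ_k)⁻¹ f(θ_k) is well-defined. Then under the hypotheses of the Newton–Kantorovich theorem (with Lipschitz Hessian of L on a ball of radius 2β around θ, with Lipschitz constant K satisfying β·K·‖H⁻¹‖ ≤ 1/4), there exists a zero of f, i.e. a critical point of L, within distance 2β of θ. -/

import Mathlib

open Metric

theorem newton_kantorovich_critical_point (N : ℕ)
    (L : EuclideanSpace ℝ (Fin N) → ℝ) (hL : ContDiff ℝ 2 L)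
    (θ : EuclideanSpace ℝ (Fin N))
    (H : EuclideanSpace ℝ (Fin N) →L[ℝ] EuclideanSpace ℝ (Fin N))
    (hH : H = fderiv ℝ (fun x => gradient L x) θ)
    (Hinv : EuclideanSpace ℝ (Fin N) →L[ℝ] EuclideanSpace ℝ (Fin N))
    (hHinv₁ : Hinv.comp H = ContinuousLinearMap.id ℝ _)
    (hHinv₂ : H.comp Hinv = ContinuousLinearMap.id ℝ _)
    (β : ℝ) (hβ : β = ‖Hinv (gradient L θ)‖)
    (K : NNReal)
    (hLip : LipschitzOnWith K (fun x => fderiv ℝ (fun y => gradient L y) x)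
      (closedBall θ (2 * β)))
    (hαK : β * K * ‖Hinv‖ ≤ 1 / 4) :
    ∃ θ' : EuclideanSpace ℝ (Fin N), ‖θ' - θ‖ ≤ 2 * β ∧ gradient L θ' = 0 := by
  set G : EuclideanSpace ℝ (Fin N) → EuclideanSpace ℝ (Fin N) := fun x => gradient L x with hGdef
  have hG : ContDiff ℝ 1 G := by
    have h1 : ContDiff ℝ 1 (fderiv ℝ L) := hL.fderiv_right (by norm_num)
    have h2 : G = fun x => (InnerProductSpace.toDual ℝ (EuclideanSpace ℝ (Fin N))).symm
        (fderiv ℝ L x) := by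
      funext x; rfl
    rw [h2]
    exact (InnerProductSpace.toDual ℝ (EuclideanSpace ℝ (Fin N))).symm.contDiff.comp h1
  have hGdiff : Differentiable ℝ G := hG.differentiable one_ne_zero
  set g : EuclideanSpace ℝ (Fin N) → EuclideanSpace ℝ (Fin N) :=
    fun x => x - Hinv (G x) with hgdef
  have hβ0 : 0 ≤ β := hβ ▸ norm_nonneg _
  set s : Set (EuclideanSpace ℝ (Fin N)) := closedBall θ (2 * β) with hsdef
  have hθs : θ ∈ s := mem_closedBall_self (by linarith)
  have hgderiv : ∀ x, HasFDerivAt g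
      (ContinuousLinearMap.id ℝ (EuclideanSpace ℝ (Fin N)) - Hinv.comp (fderiv ℝ G x)) x :=
    fun x => (hasFDerivAt_id x).sub (Hinv.hasFDerivAt.comp x (hGdiff x).hasFDerivAt)
  have hbound : ∀ x ∈ s, ‖fderiv ℝ g x‖ ≤ 1 / 2 := by
    intro x hx
    rw [(hgderiv x).fderiv]
    have h1 : ContinuousLinearMap.id ℝ (EuclideanSpace ℝ (Fin N)) - Hinv.comp (fderiv ℝ G x)
        = Hinv.comp (H - fderiv ℝ G x) := by
      rw [ContinuousLinearMap.comp_sub, hHinv₁]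
    rw [h1]
    have h2 : ‖H - fderiv ℝ G x‖ ≤ (K : ℝ) * (2 * β) := by
      have h3 := hLip.dist_le_mul θ hθs x hx
      rw [hH]
      have h4 : dist θ x ≤ 2 * β := by rw [dist_comm]; exact mem_closedBall.mp hx
      calc ‖fderiv ℝ (fun x => gradient L x) θ - fderiv ℝ G x‖
          = dist (fderiv ℝ (fun y => gradient L y) θ) (fderiv ℝ (fun y => gradient L y) x) := by
            rw [dist_eq_norm]
        _ ≤ (K : ℝ) * dist θ x := h3
        _ ≤ (K : ℝ) * (2 * β) := mul_le_mul_of_nonneg_left h4 K.coe_nonneg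
    calc ‖Hinv.comp (H - fderiv ℝ G x)‖ ≤ ‖Hinv‖ * ‖H - fderiv ℝ G x‖ :=
          Hinv.opNorm_comp_le _
      _ ≤ ‖Hinv‖ * ((K : ℝ) * (2 * β)) := mul_le_mul_of_nonneg_left h2 (norm_nonneg _)
      _ = 2 * (β * K * ‖Hinv‖) := by ring
      _ ≤ 2 * (1 / 4) := by linarith
      _ = 1 / 2 := by norm_num
  have hgLip : LipschitzOnWith (1/2 : NNReal) g s := by
    apply (convex_closedBall θ (2 * β)).lipschitzOnWith_of_nnnorm_fderiv_le
      (fun x _ => (hgderiv x).differentiableAt) (fun x hx => ?_)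
    have h5 := hbound x hx
    rw [← NNReal.coe_le_coe, coe_nnnorm]
    push_cast
    linarith
  have hgθ : ‖g θ - θ‖ = β := by
    simp only [hgdef]
    rw [hβ]
    simp [norm_sub_rev]
    rfl
  have hmaps : Set.MapsTo g s s := by
    intro x hx
    rw [hsdef, mem_closedBall, dist_eq_norm]
    have hd : dist (g x) (g θ) ≤ (1/2 : NNReal) * dist x θ := hgLip.dist_le_mul x hx θ hθs
    rw [dist_eq_norm, dist_eq_norm] at hd
    have hx2 : ‖x - θ‖ ≤ 2 * β := by rw [← dist_eq_norm]; exact mem_closedBall.mp hx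
    have hc : ((1/2 : NNReal) : ℝ) = 1/2 := by norm_num
    rw [hc] at hd
    calc ‖g x - θ‖ ≤ ‖g x - g θ‖ + ‖g θ - θ‖ := norm_sub_le_norm_sub_add_norm_sub _ _ _
      _ ≤ 1/2 * ‖x - θ‖ + β := by rw [hgθ]; linarith
      _ ≤ 1/2 * (2 * β) + β := by linarith
      _ = 2 * β := by ring
  have hcontr : ContractingWith (1/2 : NNReal) (hmaps.restrict g s s) :=
    ⟨by rw [← NNReal.coe_lt_coe]; norm_num, hgLip.mapsToRestrict hmaps⟩
  obtain ⟨y, hys, hfix, -, -⟩ := hcontr.exists_fixedPoint'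
    (isClosed_closedBall : IsClosed s).isComplete hmaps hθs (edist_ne_top _ _)
  refine ⟨y, ?_, ?_⟩
  · rw [← dist_eq_norm]; exact mem_closedBall.mp hys
  · have h0 : Hinv (G y) = 0 := by
      have h6 : y - Hinv (G y) = y := hfix
      exact sub_eq_self.mp h6
    have h7 : G y = (H.comp Hinv) (G y) := by rw [hHinv₂]; rfl
    rw [ContinuousLinearMap.comp_apply, h0, map_zero] at h7
    exact h7
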